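/- arXiv:2009.01114 — 8 statements merged into one kernel-verified Lean document; each statement's English description precedes it below -/
import Mathlib

section
/- Let b ≥ 3 and let n be a positive integer that is neither of the form d·b^k − 1 with 2 ≤ d ≤ b, nor of the form b^k + (b−2)·b^{k−1} with k ≥ 1. If n ≥ b then S_{1,b}(n) < n. -/
/-- The t-shifted Sloane map in base b: product of (digit + t) over base-b digits. -/
def shiftedSloane (t b n : ℕ) : ℕ := ((Nat.digits b n).map (· + t)).prod

lemma sloane_zero (b : ℕ) : shiftedSloane 1 b 0 = 1 := by simp [shiftedSloane]

lemma sloane_step {b : ℕ} (hb : 2 ≤ b) {n : ℕ} (hn : 0 < n) :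
    shiftedSloane 1 b n = (n % b + 1) * shiftedSloane 1 b (n / b) := by
  unfold shiftedSloane
  rw [Nat.digits_def' hb hn]
  simp

lemma sloane_lt_base {b n : ℕ} (hb : 2 ≤ b) (hn : n < b) :
    shiftedSloane 1 b n = n + 1 := by
  rcases Nat.eq_zero_or_pos n with h | h
  · simp [h, sloane_zero]
  · rw [sloane_step hb h, Nat.mod_eq_of_lt hn, Nat.div_eq_of_lt hn, sloane_zero]
    ring

lemma lemA {b : ℕ} (hb : 2 ≤ b) {d : ℕ} (hd1 : 1 ≤ d) (hd : d ≤ b) :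
    ∀ k, shiftedSloane 1 b (d * b ^ k - 1) = d * b ^ k := by
  intro k
  induction k with
  | zero =>
      simp only [pow_zero, mul_one]
      rcases Nat.eq_or_lt_of_le hd1 with h | h
      · rw [← h]; simp [sloane_zero]
      · rw [sloane_lt_base hb (by omega)]; omega
  | succ k ih =>
      have hp : 1 ≤ b ^ k := Nat.one_le_pow _ _ (by omega)
      have hP : 1 ≤ d * b ^ k := le_trans hp (Nat.le_mul_of_pos_left _ (by omega))
      have e1 : d * b ^ (k + 1) = b * (d * b ^ k) := by rw [pow_succ]; ring
      have e2 : b * (d * b ^ k - 1) = b * (d * b ^ k) - b := by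
        rw [← Nat.pred_eq_sub_one, Nat.mul_pred]
      have hbig : b ≤ b * (d * b ^ k) := Nat.le_mul_of_pos_right _ hP
      have hm : d * b ^ (k + 1) - 1 = b * (d * b ^ k - 1) + (b - 1) := by omega
      have hm0 : 0 < d * b ^ (k + 1) - 1 := by omega
      rw [sloane_step hb hm0, hm, Nat.mul_add_mod, Nat.mul_add_div (by omega),
        Nat.mod_eq_of_lt (by omega), Nat.div_eq_of_lt (by omega)]
      simp only [Nat.add_zero]
      rw [ih]
      have : b - 1 + 1 = b := by omega
      rw [this, e1]

lemma lemB {b : ℕ} (hb : 3 ≤ b) :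
    ∀ j, shiftedSloane 1 b ((2 * b - 2) * b ^ j) = 2 * b - 2 := by
  intro j
  induction j with
  | zero =>
      simp only [pow_zero, mul_one]
      have hm : 2 * b - 2 = b * 1 + (b - 2) := by omega
      rw [sloane_step (by omega) (by omega), hm, Nat.mul_add_mod, Nat.mul_add_div (by omega),
        Nat.mod_eq_of_lt (by omega), Nat.div_eq_of_lt (by omega), Nat.add_zero,
        sloane_lt_base (by omega) (by omega)]
      omega
  | succ j ih =>
      have hp : 1 ≤ b ^ j := Nat.one_le_pow _ _ (by omega)
      have hP : 1 ≤ (2 * b - 2) * b ^ j := le_trans hp (Nat.le_mul_of_pos_left _ (by omega))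
      have e1 : (2 * b - 2) * b ^ (j + 1) = b * ((2 * b - 2) * b ^ j) := by
        rw [pow_succ]; ring
      rw [e1, sloane_step (by omega) (by positivity)]
      rw [Nat.mul_mod_right, Nat.mul_div_cancel_left _ (show 0 < b by omega), ih]
      ring

lemma lemEq {b : ℕ} (hb : 2 ≤ b) (j : ℕ) :
    b ^ (j + 1) + (b - 2) * b ^ j = (2 * b - 2) * b ^ j := by
  have e1 : (b - 2) * b ^ j = b * b ^ j - 2 * b ^ j := by
    rw [Nat.sub_mul]
  have e2 : (2 * b - 2) * b ^ j = 2 * (b * b ^ j) - 2 * b ^ j := by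
    rw [Nat.sub_mul]; ring_nf
  have e3 : b ^ (j + 1) = b * b ^ j := by rw [pow_succ]; ring
  have h4 : 2 * b ^ j ≤ b * b ^ j := Nat.mul_le_mul_right _ hb
  omega

lemma key {b : ℕ} (hb : 3 ≤ b) : ∀ n, b ≤ n →
    (¬ ∃ d k : ℕ, 2 ≤ d ∧ d ≤ b ∧ n = d * b ^ k - 1) →
    (¬ ∃ k : ℕ, 1 ≤ k ∧ n = b ^ k + (b - 2) * b ^ (k - 1)) →
    shiftedSloane 1 b n < n := by
  intro n
  induction n using Nat.strong_induction_on with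
  | _ n ih =>
  intro hn h1 h2
  have hb2 : 2 ≤ b := by omega
  have hdm : b * (n / b) + n % b = n := Nat.div_add_mod n b
  have hS0 : shiftedSloane 1 b n = (n % b + 1) * shiftedSloane 1 b (n / b) :=
    sloane_step hb2 (by omega)
  obtain ⟨q, hq⟩ : ∃ q, n / b = q := ⟨_, rfl⟩
  obtain ⟨r, hr⟩ : ∃ r, n % b = r := ⟨_, rfl⟩
  rw [hq, hr] at hdm hS0
  have hrb : r < b := hr ▸ Nat.mod_lt _ (by omega)
  have hq1 : 1 ≤ q := by
    rw [← hq]; exact (Nat.one_le_div_iff (by omega)).mpr hn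
  have hqn : q < n := by
    rw [← hq]; exact Nat.div_lt_self (by omega) (by omega)
  have hS := hS0
  by_cases hqb : q < b
  · -- two-digit case
    have hSq : shiftedSloane 1 b q = q + 1 := sloane_lt_base hb2 hqb
    by_cases hr1 : r = b - 1
    · exfalso; apply h1
      refine ⟨q + 1, 1, by omega, by omega, ?_⟩
      rw [pow_one]
      have e : (q + 1) * b = b * q + b := by ring
      omega
    · by_cases hcase : q = 1 ∧ r = b - 2
      · exfalso; apply h2
        refine ⟨1, le_refl 1, ?_⟩
        simp only [pow_one, Nat.sub_self, pow_zero, mul_one]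
        have e : b * q = b := by rw [hcase.1, mul_one]
        omega
      · rw [hS, hSq, ← hdm]
        have h3 : r + 3 ≤ b ∨ (r + 2 ≤ b ∧ 2 ≤ q) := by omega
        rcases h3 with h3 | ⟨h3, h4⟩
        · have hm : (r + 3) * q ≤ b * q := Nat.mul_le_mul_right q h3
          nlinarith
        · have hm : (r + 2) * q ≤ b * q := Nat.mul_le_mul_right q h3
          nlinarith
  · push_neg at hqb
    by_cases hF1q : ∃ d k : ℕ, 2 ≤ d ∧ d ≤ b ∧ q = d * b ^ k - 1
    · obtain ⟨d, k, hd2, hdb, hqe⟩ := hF1q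
      have hk1 : 1 ≤ k := by
        rcases Nat.eq_zero_or_pos k with h | h
        · subst h; simp only [pow_zero, mul_one] at hqe; omega
        · exact h
      have hSq : shiftedSloane 1 b q = d * b ^ k := by
        rw [hqe]; exact lemA hb2 (by omega) hdb k
      have hp : b ≤ b ^ k := by
        calc b = b ^ 1 := (pow_one b).symm
        _ ≤ b ^ k := Nat.pow_le_pow_right (by omega) hk1
      have hPge : 2 * b ≤ d * b ^ k := Nat.mul_le_mul hd2 hp
      have e2 : b * (d * b ^ k - 1) = b * (d * b ^ k) - b := by
        rw [← Nat.pred_eq_sub_one, Nat.mul_pred]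
      have hbig : 3 * (d * b ^ k) ≤ b * (d * b ^ k) := Nat.mul_le_mul_right _ hb
      have eqq : b * q = b * (d * b ^ k) - b := by rw [hqe]; exact e2
      by_cases hr1 : r = b - 1
      · exfalso; apply h1
        refine ⟨d, k + 1, hd2, hdb, ?_⟩
        have e1 : d * b ^ (k + 1) = b * (d * b ^ k) := by rw [pow_succ]; ring
        omega
      · rw [hS, hSq]
        have hmul1 : (r + 1) * (d * b ^ k) ≤ (b - 1) * (d * b ^ k) :=
          Nat.mul_le_mul_right _ (by omega)
        have hsub : (b - 1) * (d * b ^ k) = b * (d * b ^ k) - d * b ^ k := by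
          rw [Nat.sub_mul, one_mul]
        omega
    · by_cases hF2q : ∃ j : ℕ, q = (2 * b - 2) * b ^ j
      · obtain ⟨j, hqe⟩ := hF2q
        have hSq : shiftedSloane 1 b q = 2 * b - 2 := by rw [hqe]; exact lemB hb j
        have eqq : b * q = b * ((2 * b - 2) * b ^ j) := by rw [hqe]
        by_cases hr0 : r = 0
        · exfalso; apply h2
          refine ⟨j + 2, by omega, ?_⟩
          have e0 : j + 2 - 1 = j + 1 := rfl
          rw [e0, lemEq hb2 (j + 1)]
          have e1 : (2 * b - 2) * b ^ (j + 1) = b * ((2 * b - 2) * b ^ j) := by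
            rw [pow_succ]; ring
          omega
        · rw [hS, hSq]
          have h1' : (r + 1) * (2 * b - 2) ≤ b * (2 * b - 2) :=
            Nat.mul_le_mul_right _ (by omega)
          have hp : 1 ≤ b ^ j := Nat.one_le_pow _ _ (by omega)
          have h2' : (2 * b - 2) * 1 ≤ (2 * b - 2) * b ^ j := Nat.mul_le_mul_left _ hp
          have h3' : b * ((2 * b - 2) * 1) ≤ b * ((2 * b - 2) * b ^ j) :=
            Nat.mul_le_mul_left _ h2'
          have e1 : b * ((2 * b - 2) * 1) = b * (2 * b - 2) := by ring
          omega
      · have hF2q' : ¬ ∃ k : ℕ, 1 ≤ k ∧ q = b ^ k + (b - 2) * b ^ (k - 1) := by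
          rintro ⟨k, hk, hqe⟩
          apply hF2q
          refine ⟨k - 1, ?_⟩
          have : k - 1 + 1 = k := by omega
          rw [hqe, ← lemEq hb2 (k - 1), this]
        have hSqlt : shiftedSloane 1 b q < q := ih q hqn hqb hF1q hF2q'
        rw [hS]
        have hmul : (r + 1) * shiftedSloane 1 b q ≤ b * (q - 1) :=
          Nat.mul_le_mul (by omega) (by omega)
        have e2 : b * (q - 1) = b * q - b := by
          rw [← Nat.pred_eq_sub_one, Nat.mul_pred]
        omega

theorem shifted_sloane_one_decreasing (b n : ℕ) (hb : 3 ≤ b) (hn : b ≤ n)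
    (h1 : ¬ ∃ d k : ℕ, 2 ≤ d ∧ d ≤ b ∧ n = d * b ^ k - 1)
    (h2 : ¬ ∃ k : ℕ, 1 ≤ k ∧ n = b ^ k + (b - 2) * b ^ (k - 1)) :
    shiftedSloane 1 b n < n := by
  exact key hb n hn h1 h2
end

section
/- Let b ≥ 3. For every positive integer n, the orbit of n under iteration of S_{1,b} eventually reaches either the fixed point 2b−2 or the cycle (2, 3, …, b−1, b). -/
lemma shiftedSloane_rec (b n : ℕ) (hb : 2 ≤ b) (hn : 0 < n) :
    shiftedSloane 1 b n = (n % b + 1) * shiftedSloane 1 b (n / b) := by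
  unfold shiftedSloane
  rw [Nat.digits_def' hb hn]
  simp

lemma shiftedSloane_pos (b n : ℕ) : 0 < shiftedSloane 1 b n := by
  unfold shiftedSloane
  apply List.prod_pos
  intro x hx
  simp only [List.mem_map] at hx
  obtain ⟨d, _, rfl⟩ := hx
  omega

lemma shiftedSloane_le (b : ℕ) (hb : 2 ≤ b) : ∀ n, shiftedSloane 1 b n ≤ n + 1 := by
  intro n
  induction n using Nat.strong_induction_on with
  | _ n ih =>
    rcases Nat.eq_zero_or_pos n with h | h
    · subst h; simp [shiftedSloane]
    rw [shiftedSloane_rec b n hb h]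
    have hq : n / b < n := Nat.div_lt_self h (by omega)
    have h1 := ih (n / b) hq
    have h2 : n % b < b := Nat.mod_lt _ (by omega)
    have h3 : b * (n / b) + n % b = n := Nat.div_add_mod n b
    have h4 : (n % b + 1) * (n / b) ≤ b * (n / b) :=
      Nat.mul_le_mul_right _ (by omega)
    calc (n % b + 1) * shiftedSloane 1 b (n / b)
        ≤ (n % b + 1) * (n / b + 1) := Nat.mul_le_mul_left _ h1
      _ = (n % b + 1) * (n / b) + (n % b + 1) := by ring
      _ ≤ n + 1 := by linarith

theorem shifted_sloane_one_stabilizes (b n : ℕ) (hb : 3 ≤ b) (hn : 0 < n) :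
    ∃ k : ℕ, (shiftedSloane 1 b)^[k] n = 2 * b - 2 ∨
      (2 ≤ (shiftedSloane 1 b)^[k] n ∧ (shiftedSloane 1 b)^[k] n ≤ b) := by
  induction n using Nat.strong_induction_on with
  | _ n ih =>
  by_cases hsmall : n ≤ b
  · rcases Nat.lt_or_ge n 2 with h2 | h2
    · -- n = 1
      have hn1 : n = 1 := by omega
      subst hn1
      refine ⟨1, Or.inr ?_⟩
      have hf1 : shiftedSloane 1 b 1 = 2 := by
        rw [shiftedSloane_rec b 1 (by omega) one_pos]
        rw [Nat.mod_eq_of_lt (by omega), Nat.div_eq_of_lt (by omega)]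
        simp [shiftedSloane]
      rw [Function.iterate_one, hf1]
      omega
    · exact ⟨0, Or.inr ⟨h2, hsmall⟩⟩
  · push_neg at hsmall
    set q := n / b with hqdef
    set r := n % b with hrdef
    have hrec : shiftedSloane 1 b n = (r + 1) * shiftedSloane 1 b q :=
      shiftedSloane_rec b n (by omega) hn
    have hq1 : 1 ≤ q := Nat.one_le_div_iff (by omega) |>.mpr (le_of_lt hsmall)
    have hr : r < b := Nat.mod_lt _ (by omega)
    have hnqr : b * q + r = n := Nat.div_add_mod n b
    have hfq : shiftedSloane 1 b q ≤ q + 1 := shiftedSloane_le b (by omega) q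
    have hfn : shiftedSloane 1 b n ≤ n + 1 := shiftedSloane_le b (by omega) n
    rcases Nat.lt_or_ge (shiftedSloane 1 b n) n with hlt | hge
    · -- strictly decreases: recurse
      obtain ⟨k, hk⟩ := ih (shiftedSloane 1 b n) hlt (shiftedSloane_pos b n)
      exact ⟨k + 1, by rwa [Function.iterate_succ_apply]⟩
    · rcases Nat.eq_or_lt_of_le hge with heq | hlt1
      · -- fixed point: n = 2b - 2
        have h : (r + 1) * shiftedSloane 1 b q = b * q + r := by
          rw [← hrec, ← heq]; exact hnqr.symm
        refine ⟨0, Or.inl ?_⟩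
        simp only [Function.iterate_zero, id_eq]
        rcases Nat.eq_or_lt_of_le (Nat.succ_le_of_lt hr) with he | hlt2
        · -- r + 1 = b : divisibility contradiction
          exfalso
          have hd : b ∣ b * q + r := by
            rw [← h, ← he]
            exact Dvd.intro _ rfl
          have hd2 : b ∣ r := (Nat.dvd_add_right ⟨q, rfl⟩).mp hd
          have hrpos : 0 < r := by omega
          exact absurd (Nat.le_of_dvd hrpos hd2) (by omega)
        · -- r + 2 ≤ b
          have h2 : b * q + r ≤ (r + 1) * (q + 1) := h ▸ Nat.mul_le_mul_left _ hfq
          have h3 : (r + 1) * (q + 1) = (r + 1) * q + r + 1 := by ring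
          have h5 : (r + 2) * q ≤ b * q := Nat.mul_le_mul_right q (by omega)
          have h6 : (r + 2) * q = (r + 1) * q + q := by ring
          have hqle : q ≤ 1 := by linarith
          have hq_eq : q = 1 := by omega
          rw [hq_eq] at h2 hnqr
          norm_num at h2 hnqr
          omega
      · -- shiftedSloane 1 b n = n + 1
        have heq : shiftedSloane 1 b n = n + 1 := by omega
        have h : (r + 1) * shiftedSloane 1 b q = b * q + r + 1 := by
          rw [← hrec, heq]; omega
        -- show r = b - 1
        have hrb : r + 1 = b := by
          by_contra hne
          have hr2 : r + 2 ≤ b := by omega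
          have h2 : b * q + r + 1 ≤ (r + 1) * (q + 1) := h ▸ Nat.mul_le_mul_left _ hfq
          have h3 : (r + 1) * (q + 1) = (r + 1) * q + r + 1 := by ring
          have h5 : (r + 2) * q ≤ b * q := Nat.mul_le_mul_right q (by omega)
          have h6 : (r + 2) * q = (r + 1) * q + q := by ring
          linarith
        have hn1 : n + 1 = b * (q + 1) := by
          have hb1 : b * (q + 1) = b * q + b := by ring
          omega
        have hffn : shiftedSloane 1 b (n + 1) = shiftedSloane 1 b (q + 1) := by
          rw [hn1, shiftedSloane_rec b (b * (q + 1)) (by omega) (by positivity)]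
          rw [Nat.mul_mod_right, Nat.mul_div_cancel_left _ (by omega : 0 < b)]
          ring
        have hlt' : shiftedSloane 1 b (q + 1) < n := by
          have := shiftedSloane_le b (by omega) (q + 1)
          have h5 : 3 * q ≤ b * q := Nat.mul_le_mul_right q (by omega)
          omega
        obtain ⟨k, hk⟩ := ih (shiftedSloane 1 b (q + 1)) hlt' (shiftedSloane_pos b (q + 1))
        refine ⟨k + 2, ?_⟩
        rw [show k + 2 = k + 1 + 1 from rfl, Function.iterate_succ_apply,
          Function.iterate_succ_apply, heq, hffn]
        exact hk
end

section
/- For every positive integer n, the sequence of iterates of S_{1,3} starting at n reaches the cycle (2, 3) if and only if either n or 2^{#1(n)_3} has no digit 1 in its ternary expansion; otherwise it reaches the fixed point 4. -/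
namespace SloaneAux

/-- count of 1s in ternary digits of 2^a -/
def F (a : ℕ) : ℕ := (Nat.digits 3 (2 ^ a)).count 1

lemma F_one : F 1 = 0 := by unfold F; norm_num
lemma F_two : F 2 = 2 := by unfold F; norm_num
lemma count2_four : (Nat.digits 3 (2 ^ 2)).count 2 = 0 := by norm_num
lemma count1_three : (Nat.digits 3 3).count 1 = 1 := by norm_num
lemma count1_two : (Nat.digits 3 2).count 1 = 0 := by norm_num

lemma prod_map_succ (L : List ℕ) (h : ∀ d ∈ L, d < 3) :
    (L.map (· + 1)).prod = 2 ^ L.count 1 * 3 ^ L.count 2 := by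
  induction L with
  | nil => simp
  | cons d t ih =>
    have hd : d < 3 := h d (by simp)
    have iht := ih (fun x hx => h x (by simp [hx]))
    simp only [List.map_cons, List.prod_cons, List.count_cons, iht]
    interval_cases d <;> simp <;> ring

lemma S_eq (n : ℕ) : shiftedSloane 1 3 n =
    2 ^ ((Nat.digits 3 n).count 1) * 3 ^ ((Nat.digits 3 n).count 2) := by
  apply prod_map_succ
  intro d hd
  exact Nat.digits_lt_base (by norm_num) hd

lemma digits_pow_mul (b m : ℕ) (hm : 0 < m) :
    Nat.digits 3 (3 ^ b * m) = List.replicate b 0 ++ Nat.digits 3 m := by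
  induction b with
  | zero => simp
  | succ b ih =>
    have h3 : 0 < 3 ^ (b+1) * m := by positivity
    rw [Nat.digits_def' (by norm_num : (1:ℕ) < 3) h3]
    have : 3 ^ (b+1) * m = 3 * (3 ^ b * m) := by ring
    rw [this, Nat.mul_mod_right, Nat.mul_div_cancel_left _ (by norm_num), ih]
    simp [List.replicate_succ]

lemma count_pow_mul (c b m : ℕ) (hm : 0 < m) (hc : c ≠ 0) :
    (Nat.digits 3 (3 ^ b * m)).count c = (Nat.digits 3 m).count c := by
  rw [digits_pow_mul b m hm, List.count_append, List.count_replicate]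
  rcases c with _ | c
  · exact absurd rfl hc
  · simp

lemma S_pow (a b : ℕ) : shiftedSloane 1 3 (2 ^ a * 3 ^ b) =
    2 ^ F a * 3 ^ ((Nat.digits 3 (2 ^ a)).count 2) := by
  rw [S_eq]
  have h : (2:ℕ) ^ a * 3 ^ b = 3 ^ b * 2 ^ a := by ring
  rw [h, count_pow_mul 1 b _ (by positivity) one_ne_zero,
    count_pow_mul 2 b _ (by positivity) two_ne_zero]
  rfl

lemma sum_mod_two (L : List ℕ) (h : ∀ d ∈ L, d < 3) :
    L.sum % 2 = L.count 1 % 2 := by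
  induction L with
  | nil => simp
  | cons d t ih =>
    have hd : d < 3 := h d (by simp)
    have iht := ih (fun x hx => h x (by simp [hx]))
    simp only [List.sum_cons, List.count_cons]
    interval_cases d <;> simp <;> omega

lemma even_F {a : ℕ} (ha : 1 ≤ a) : Even (F a) := by
  have h1 : (2:ℕ) ^ a ≡ (Nat.digits 3 (2 ^ a)).sum [MOD 2] :=
    Nat.modEq_digits_sum 2 3 (by norm_num) _
  have h2 : (Nat.digits 3 (2 ^ a)).sum % 2 = F a % 2 :=
    sum_mod_two _ (fun d hd => Nat.digits_lt_base (by norm_num) hd)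
  have h3 : (2:ℕ) ^ a % 2 = 0 := by
    have : (2:ℕ) ∣ 2 ^ a := dvd_pow_self 2 (by omega)
    omega
  have : F a % 2 = 0 := by
    unfold Nat.ModEq at h1; omega
  exact Nat.even_iff.mpr this

lemma F_pos_of_even {a : ℕ} (ha : Even a) : 0 < F a := by
  have hp : 0 < (2:ℕ) ^ a := by positivity
  have hmod : (2:ℕ) ^ a % 3 = 1 := by
    obtain ⟨c, rfl⟩ := ha
    have h4 : (2:ℕ) ^ (c + c) = 4 ^ c := by
      rw [show (4:ℕ) = 2 ^ 2 by norm_num, ← pow_mul]; ring_nf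
    rw [h4, Nat.pow_mod]
    norm_num
  have := Nat.digits_def' (by norm_num : (1:ℕ) < 3) hp
  unfold F
  rw [this, hmod]
  simp

lemma two_pow_lt (a : ℕ) (ha : 4 ≤ a) : 2 ^ a < 3 ^ (a - 1) := by
  induction a with
  | zero => omega
  | succ b ih =>
    rcases Nat.lt_or_ge b 4 with hb | hb
    · interval_cases b <;> simp_all <;> norm_num
    · have h1 := ih (by omega)
      have hb1 : b - 1 + 1 = b := by omega
      have hpos : 0 < 3 ^ (b - 1) := by positivity
      have : 2 ^ (b + 1) < 3 ^ (b - 1 + 1) := by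
        rw [pow_succ, pow_succ]; nlinarith
      rwa [hb1] at this

lemma F_lt {a : ℕ} (ha : 4 ≤ a) : F a < a := by
  have h1 : (2:ℕ) ^ a < 3 ^ (a - 1) := two_pow_lt a ha
  have hne : (2:ℕ) ^ a ≠ 0 := by positivity
  have hlen : (Nat.digits 3 (2 ^ a)).length ≤ a - 1 := by
    rw [Nat.digits_len 3 _ (by norm_num) hne]
    have := Nat.log_lt_of_lt_pow hne h1
    omega
  have := List.count_le_length (a := 1) (l := Nat.digits 3 (2 ^ a))
  unfold F
  omega

lemma descent : ∀ a : ℕ, Even a → 2 ≤ a → ∃ j, F^[j] a = 2 := by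
  intro a
  induction a using Nat.strong_induction_on with
  | _ a ih =>
    intro hev h2
    rcases Nat.lt_or_ge a 4 with h4 | h4
    · have : a = 2 := by
        obtain ⟨c, rfl⟩ := hev; omega
      exact ⟨0, by simp [this]⟩
    · have hFlt : F a < a := F_lt h4
      have hFev : Even (F a) := even_F (by omega)
      have hFpos : 0 < F a := F_pos_of_even hev
      have hF2 : 2 ≤ F a := by
        obtain ⟨c, hc⟩ := hFev; omega
      obtain ⟨j, hj⟩ := ih (F a) hFlt hFev hF2
      exact ⟨j + 1, by rwa [Function.iterate_succ_apply]⟩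

lemma iter_form (n : ℕ) (j : ℕ) :
    ∃ c : ℕ, (shiftedSloane 1 3)^[j + 1] n =
      2 ^ (F^[j] ((Nat.digits 3 n).count 1)) * 3 ^ c := by
  induction j with
  | zero =>
    exact ⟨(Nat.digits 3 n).count 2, by simpa using S_eq n⟩
  | succ j ih =>
    obtain ⟨c, hc⟩ := ih
    refine ⟨(Nat.digits 3 (2 ^ (F^[j] ((Nat.digits 3 n).count 1)))).count 2, ?_⟩
    rw [Function.iterate_succ_apply', hc, S_pow, Function.iterate_succ_apply']

end SloaneAux

open SloaneAux in
theorem shifted_sloane_one_base_three_dichotomy (n : ℕ) (hn : 0 < n) :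
    ((∃ k : ℕ, (shiftedSloane 1 3)^[k] n = 2 ∨ (shiftedSloane 1 3)^[k] n = 3) ↔
      ((Nat.digits 3 n).count 1 = 0 ∨
        (Nat.digits 3 (2 ^ ((Nat.digits 3 n).count 1))).count 1 = 0)) ∧
    (¬ ((Nat.digits 3 n).count 1 = 0 ∨
        (Nat.digits 3 (2 ^ ((Nat.digits 3 n).count 1))).count 1 = 0) →
      ∃ k : ℕ, (shiftedSloane 1 3)^[k] n = 4) := by
  set a := (Nat.digits 3 n).count 1 with ha
  have hS3 : ∀ b : ℕ, shiftedSloane 1 3 (3 ^ b) = 2 := by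
    intro b
    have h1 : (3:ℕ) ^ b = 3 ^ b * 1 := by ring
    rw [S_eq, h1, count_pow_mul 1 b 1 one_pos one_ne_zero,
      count_pow_mul 2 b 1 one_pos two_ne_zero]
    norm_num
  -- reach 4 in bad case
  have reach4 : (¬ (a = 0 ∨ F a = 0)) → ∃ k, (shiftedSloane 1 3)^[k] n = 4 := by
    intro hbad
    push_neg at hbad
    obtain ⟨ha0, hFa0⟩ := hbad
    have ha1 : 1 ≤ a := by omega
    have hFev : Even (F a) := even_F ha1
    have hF2 : 2 ≤ F a := by obtain ⟨c, hc⟩ := hFev; omega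
    obtain ⟨j, hj⟩ := descent (F a) hFev hF2
    have hJ : F^[j + 1] a = 2 := by rwa [Function.iterate_succ_apply]
    obtain ⟨c, hc⟩ := iter_form n (j + 1)
    rw [← ha, hJ] at hc
    refine ⟨j + 1 + 1 + 1, ?_⟩
    rw [Function.iterate_succ_apply', hc, S_pow, F_two, count2_four]
    norm_num
  constructor
  · constructor
    · -- reaches cycle → condition
      intro hex
      obtain ⟨k, hk⟩ := hex
      by_contra hbad
      push_neg at hbad
      obtain ⟨ha0, hFa0⟩ := hbad
      have ha1 : 1 ≤ a := by omega
      have hFa0' : F a ≠ 0 := hFa0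
      rcases Nat.eq_zero_or_pos k with rfl | hk0
      · simp only [Function.iterate_zero, id] at hk
        rcases hk with h2 | h3
        · exact ha0 (by rw [ha, h2, count1_two])
        · have haa : a = 1 := by rw [ha, h3, count1_three]
          rw [haa] at hFa0
          exact hFa0 F_one
      · obtain ⟨k', rfl⟩ : ∃ k', k = k' + 1 := ⟨k - 1, by omega⟩
        obtain ⟨c, hc⟩ := iter_form n k'
        rw [← ha] at hc
        rw [hc] at hk
        set e := F^[k'] a with he
        -- e = 1 is impossible, and e ≥ 1
        have hepos : 1 ≤ e ∧ e ≠ 1 := by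
          rcases Nat.eq_zero_or_pos k' with rfl | hk'0
          · constructor
            · simpa [he] using ha1
            · intro h1
              have : a = 1 := by simpa [he] using h1
              rw [this] at hFa0
              exact hFa0 F_one
          · obtain ⟨k'', rfl⟩ : ∃ k'', k' = k'' + 1 := ⟨k' - 1, by omega⟩
            have key : ∀ m, 2 ≤ F^[m+1] a ∧ Even (F^[m+1] a) := by
              intro m
              induction m with
              | zero =>
                simp only [zero_add, Function.iterate_one]
                have hFev : Even (F a) := even_F ha1
                exact ⟨by obtain ⟨c', hc'⟩ := hFev; omega, hFev⟩
              | succ m ihm =>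
                obtain ⟨h2m, hevm⟩ := ihm
                rw [Function.iterate_succ_apply']
                have h1 : 0 < F (F^[m+1] a) := F_pos_of_even hevm
                have h2 : Even (F (F^[m+1] a)) := even_F (by omega)
                exact ⟨by obtain ⟨c', hc'⟩ := h2; omega, h2⟩
            have := (key k'').1
            rw [← he] at this
            omega
        obtain ⟨he1, hene1⟩ := hepos
        rcases hk with h2 | h3
        · -- 2^e * 3^c = 2
          have h3d : ¬ ((3:ℕ) ∣ 2) := by decide
          have hc0 : c = 0 := by
            by_contra hc0
            exact h3d (h2 ▸ Dvd.dvd.mul_left (dvd_pow_self 3 hc0) _)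
          rw [hc0] at h2
          simp only [pow_zero, mul_one] at h2
          have h21 : (2:ℕ) ^ e = 2 ^ 1 := by simpa using h2
          exact hene1 (Nat.pow_right_injective (le_refl 2) h21)
        · -- 2^e * 3^c = 3 impossible: 2 divides lhs
          have h2d : (2:ℕ) ∣ 2 ^ e * 3 ^ c :=
            Dvd.dvd.mul_right (dvd_pow_self 2 (by omega)) _
          rw [h3] at h2d
          norm_num at h2d
    · -- condition → reaches cycle
      intro hcond
      rcases hcond with ha0 | hF0
      · have h1 : shiftedSloane 1 3 n = 3 ^ ((Nat.digits 3 n).count 2) := by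
          rw [S_eq, ← ha, ha0]; ring
        refine ⟨2, Or.inl ?_⟩
        simp only [Function.iterate_succ, Function.iterate_zero, Function.comp_apply, id_eq]
        rw [h1, hS3]
      · obtain ⟨c, hc⟩ := iter_form n 0
        simp only [zero_add, Function.iterate_one, Function.iterate_zero, id_eq] at hc
        rw [← ha] at hc
        refine ⟨3, Or.inl ?_⟩
        simp only [Function.iterate_succ, Function.iterate_zero, Function.comp_apply, id_eq]
        rw [hc, S_pow]
        have hFa : F a = 0 := hF0
        rw [hFa]
        simp only [pow_zero, one_mul]
        exact hS3 _
  · exact reach4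
end

section
/- Fix a base b ≥ 3 and let α = log(b−1)/log(b) < 1. For every integer n > b, if k_j denotes the number of base-b digits of the j-th iterate of the Erdős–Sloane map S_b^* at n, then k_{j+1} ≤ 1 + α·k_j for all j ≥ 0, and hence k_j ≤ α^j k_0 + 1/(1−α) for all j ≥ 1. -/
/-- The Erdős–Sloane map in base b: product of the nonzero base-b digits. -/
def erdosSloane (b n : ℕ) : ℕ := ((Nat.digits b n).filter (· ≠ 0)).prod

lemma erdosSloane_pos (b n : ℕ) : 0 < erdosSloane b n := by
  apply List.prod_pos
  intro x hx
  have := (List.mem_filter.mp hx).2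
  simp at this
  omega

lemma erdosSloane_le (b n : ℕ) (hb : 2 ≤ b) :
    erdosSloane b n ≤ (b - 1) ^ (Nat.digits b n).length := by
  unfold erdosSloane
  calc ((Nat.digits b n).filter (· ≠ 0)).prod
      ≤ (b - 1) ^ ((Nat.digits b n).filter (· ≠ 0)).length := by
        apply List.prod_le_pow_card
        intro x hx
        have := Nat.digits_lt_base (by omega) (List.mem_filter.mp hx).1
        omega
    _ ≤ (b - 1) ^ (Nat.digits b n).length :=
        Nat.pow_le_pow_right (by omega) (List.length_filter_le _ _)

theorem erdos_sloane_digit_count_decay (b n : ℕ) (hb : 3 ≤ b) (hn : b < n) :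
    let α : ℝ := Real.log (b - 1) / Real.log b
    let k : ℕ → ℕ := fun j => (Nat.digits b ((erdosSloane b)^[j] n)).length
    α < 1 ∧
    (∀ j : ℕ, (k (j + 1) : ℝ) ≤ 1 + α * k j) ∧
    (∀ j : ℕ, 1 ≤ j → (k j : ℝ) ≤ α ^ j * k 0 + 1 / (1 - α)) := by
  intro α k
  have hb1 : (1:ℝ) < b := by exact_mod_cast (by omega : 1 < b)
  have hb2 : (1:ℝ) < (b:ℝ) - 1 := by
    have : (3:ℝ) ≤ b := by exact_mod_cast hb
    linarith
  have hlogb : 0 < Real.log b := Real.log_pos hb1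
  have hα0 : 0 < α := div_pos (Real.log_pos hb2) hlogb
  have hα1 : α < 1 := by
    rw [show α = Real.log ((b:ℝ)-1) / Real.log b from rfl, div_lt_one hlogb]
    exact Real.log_lt_log (by linarith) (by linarith)
  have step : ∀ j, (k (j+1) : ℝ) ≤ 1 + α * k j := by
    intro j
    set m := (erdosSloane b)^[j] n with hm
    have hiter : (erdosSloane b)^[j+1] n = erdosSloane b m :=
      Function.iterate_succ_apply' _ _ _
    have hS : erdosSloane b m ≤ (b - 1) ^ (Nat.digits b m).length :=
      erdosSloane_le b m (by omega)
    have hSpos : 0 < erdosSloane b m := erdosSloane_pos b m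
    have hk : k (j+1) = Nat.log b (erdosSloane b m) + 1 := by
      show (Nat.digits b ((erdosSloane b)^[j+1] n)).length = _
      rw [hiter, Nat.digits_len b _ (by omega) (by omega)]
    have hlog : (Nat.log b (erdosSloane b m) : ℝ) ≤ Real.logb b (erdosSloane b m) :=
      Real.natLog_le_logb _ _
    have hcast : ((b - 1 : ℕ) : ℝ) = (b:ℝ) - 1 := by
      have : 1 ≤ b := by omega
      push_cast [this]; ring
    have h2 : Real.logb b (erdosSloane b m) ≤ (k j : ℝ) * α := by
      calc Real.logb b (erdosSloane b m)
          ≤ Real.logb b (((b - 1 : ℕ) : ℝ) ^ (Nat.digits b m).length) := by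
            apply Real.logb_le_logb_of_le hb1 (by exact_mod_cast hSpos)
            exact_mod_cast hS
        _ = (Nat.digits b m).length * Real.logb b ((b - 1 : ℕ) : ℝ) := by
            rw [Real.logb_pow]
        _ = (k j : ℝ) * α := by
            rw [hcast]
            rfl
    rw [hk]
    push_cast
    calc (Nat.log b (erdosSloane b m) : ℝ) + 1
        ≤ Real.logb b (erdosSloane b m) + 1 := by linarith
      _ ≤ (k j : ℝ) * α + 1 := by linarith
      _ = 1 + α * k j := by ring
  refine ⟨hα1, step, ?_⟩
  intro j hj
  induction j with
  | zero => omega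
  | succ i ih =>
    have h1 : (1:ℝ) ≤ 1/(1-α) := by
      rw [le_div_iff₀ (by linarith)]; linarith
    rcases Nat.eq_zero_or_pos i with h0 | hpos
    · subst h0
      calc (k 1 : ℝ) ≤ 1 + α * k 0 := step 0
        _ ≤ α ^ 1 * k 0 + 1/(1-α) := by rw [pow_one]; linarith
    · have ih' := ih hpos
      have hki : (0:ℝ) ≤ k i := Nat.cast_nonneg _
      calc (k (i+1) : ℝ) ≤ 1 + α * k i := step i
        _ ≤ 1 + α * (α ^ i * k 0 + 1/(1-α)) := by nlinarith
        _ = α ^ (i+1) * k 0 + (1 + α * (1/(1-α))) := by ring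
        _ = α ^ (i+1) * k 0 + 1/(1-α) := by
            have hne : (1:ℝ) - α ≠ 0 := by linarith
            field_simp
            ring
end

section
/- For every integer b ≥ 5, (b+1)!^{log_b(b+1)/b} < b. -/
open Real

lemma log_factorial_le (n : ℕ) (hn : 1 ≤ n) :
    Real.log (Nat.factorial n) ≤ 1 + Real.log n / 2 + n * (Real.log n - 1) := by
  obtain ⟨m, rfl⟩ : ∃ m, n = m + 1 := ⟨n - 1, (Nat.succ_pred_eq_of_pos hn).symm⟩
  have h := Stirling.log_stirlingSeq'_antitone (Nat.zero_le m)
  simp only [Function.comp, Nat.succ_eq_add_one] at h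
  rw [Stirling.log_stirlingSeq_formula, Stirling.stirlingSeq_one] at h
  have hm : (0:ℝ) < (m:ℝ) + 1 := by positivity
  have h2 : Real.log (2 * ((m:ℕ)+1 : ℕ) : ℝ) = Real.log 2 + Real.log ((m:ℝ)+1) := by
    push_cast
    rw [Real.log_mul (by norm_num) (by positivity)]
  have h3 : Real.log (((m:ℕ)+1 : ℕ) / Real.exp 1 : ℝ) = Real.log ((m:ℝ)+1) - 1 := by
    push_cast
    rw [Real.log_div (by positivity) (Real.exp_ne_zero 1), Real.log_exp]
  have h4 : Real.log (Real.exp 1 / Real.sqrt 2) = 1 - Real.log 2 / 2 := by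
    rw [Real.log_div (Real.exp_ne_zero 1) (by positivity), Real.log_exp, Real.log_sqrt (by norm_num)]
  push_cast at h h2 h3 ⊢
  rw [h2, h3, h4] at h
  linarith

lemma log_succ_le (b : ℕ) (hb : 5 ≤ b) : 3 * Real.log ((b:ℝ) + 1) ≤ 2 * b - 4 := by
  have hbR : (5:ℝ) ≤ b := by exact_mod_cast hb
  by_cases h9 : 9 ≤ b
  · have h9R : (9:ℝ) ≤ b := by exact_mod_cast h9
    have hs : (3:ℝ) ≤ Real.sqrt ((b:ℝ) + 1) := by
      rw [show (3:ℝ) = Real.sqrt 9 by rw [show (9:ℝ) = 3^2 by norm_num, Real.sqrt_sq]; norm_num]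
      exact Real.sqrt_le_sqrt (by linarith)
    have hsq : Real.sqrt ((b:ℝ)+1) * Real.sqrt ((b:ℝ)+1) = (b:ℝ)+1 :=
      Real.mul_self_sqrt (by positivity)
    have hlog : Real.log ((b:ℝ)+1) = 2 * Real.log (Real.sqrt ((b:ℝ)+1)) := by
      rw [Real.log_sqrt (by positivity)]; ring
    have hle : Real.log (Real.sqrt ((b:ℝ)+1)) ≤ Real.sqrt ((b:ℝ)+1) - 1 :=
      Real.log_le_sub_one_of_pos (by positivity)
    nlinarith [hle, hs, hsq]
  · push_neg at h9
    by_cases h6 : 6 ≤ b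
    · have h6R : (6:ℝ) ≤ b := by exact_mod_cast h6
      have hb9 : (b:ℝ) + 1 ≤ 9 := by
        have : b ≤ 8 := by omega
        have : (b:ℝ) ≤ 8 := by exact_mod_cast this
        linarith
      have h3le : Real.log 3 ≤ 4/3 := by
        rw [show Real.log 3 ≤ 4/3 ↔ Real.log 3 ≤ 4/3 from Iff.rfl]
        have : (3:ℝ) ≤ Real.exp (4/3) := by
          have h13 : (1:ℝ) + 1/3 ≤ Real.exp (1/3) := by
            have := Real.add_one_le_exp (1/3 : ℝ); linarith
          have he : (2.7182818:ℝ) < Real.exp 1 := by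
            have := Real.exp_one_gt_d9; linarith
          have : Real.exp (4/3) = Real.exp 1 * Real.exp (1/3) := by
            rw [← Real.exp_add]; norm_num
          nlinarith [Real.exp_pos (1/3:ℝ)]
        calc Real.log 3 ≤ Real.log (Real.exp (4/3)) :=
              Real.log_le_log (by norm_num) this
          _ = 4/3 := Real.log_exp _
      have h9eq : Real.log ((b:ℝ)+1) ≤ Real.log 9 :=
        Real.log_le_log (by positivity) hb9
      have : Real.log 9 = 2 * Real.log 3 := by
        rw [show (9:ℝ) = 3^2 by norm_num, Real.log_pow]; push_cast; ring
      linarith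
    · have hb5 : b = 5 := by omega
      subst hb5
      have h6le : Real.log ((5:ℕ):ℝ) + 1 ≤ 6 → True := fun _ => trivial
      have : Real.log ((5:ℝ) + 1) ≤ 2 := by
        rw [show (5:ℝ)+1 = 6 by norm_num]
        have he : (2.7182818:ℝ) < Real.exp 1 := by
          have := Real.exp_one_gt_d9; linarith
        have h6 : (6:ℝ) ≤ Real.exp 2 := by
          have : Real.exp 2 = Real.exp 1 * Real.exp 1 := by
            rw [← Real.exp_add]; norm_num
          nlinarith
        calc Real.log 6 ≤ Real.log (Real.exp 2) := Real.log_le_log (by norm_num) h6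
          _ = 2 := Real.log_exp _
      push_cast
      linarith

theorem factorial_rpow_lt (b : ℕ) (hb : 5 ≤ b) :
    ((Nat.factorial (b + 1) : ℝ)) ^ (Real.log (b + 1) / Real.log b / b) < (b : ℝ) := by
  have hbR : (5:ℝ) ≤ b := by exact_mod_cast hb
  have hb0 : (0:ℝ) < b := by linarith
  set L := Real.log ((b:ℝ) + 1) with hLdef
  set M := Real.log (b:ℝ) with hMdef
  set K := Real.log ((Nat.factorial (b+1) : ℕ) : ℝ) with hKdef
  have hM : 0 < M := Real.log_pos (by linarith)
  have hL1 : 1 < L := by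
    have he : Real.exp 1 < (b:ℝ) + 1 := by
      have := Real.exp_one_lt_d9; linarith
    have := Real.log_lt_log (Real.exp_pos 1) he
    rwa [Real.log_exp] at this
  have hK0 : 0 ≤ K := Real.log_nonneg (by exact_mod_cast Nat.one_le_iff_ne_zero.mpr (Nat.factorial_ne_zero _))
  -- L ≤ M + 1/b
  have hLM : L ≤ M + 1/b := by
    have hdiv : L - M = Real.log (((b:ℝ)+1)/b) := by
      rw [Real.log_div (by positivity) (by positivity)]
    have : Real.log (((b:ℝ)+1)/b) ≤ ((b:ℝ)+1)/b - 1 :=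
      Real.log_le_sub_one_of_pos (by positivity)
    have heq : ((b:ℝ)+1)/b - 1 = 1/b := by field_simp; ring
    linarith [hdiv ▸ this, heq ▸ (hdiv ▸ this)]
  -- Stirling bound
  have hKb : K ≤ 1 + L/2 + ((b:ℝ)+1) * (L - 1) := by
    have := log_factorial_le (b+1) (by omega)
    push_cast at this
    rw [hKdef, hLdef]
    push_cast
    linarith
  have hc := log_succ_le b hb
  -- main inequality
  have hmain : K * L < b * M^2 := by
    have hL0 : 0 < L := by linarith
    have h1 : K * L ≤ ((b:ℝ)*L - 2) * L := by
      have : K ≤ (b:ℝ)*L - 2 := by nlinarith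
      nlinarith
    have h2 : (L - 1/b)^2 ≤ M^2 := by
      have hpos : 0 ≤ L - 1/b := by
        have : 1/(b:ℝ) ≤ 1 := by rw [div_le_one hb0]; linarith
        linarith
      nlinarith
    have h3 : (b:ℝ) * (L - 1/b)^2 = (b:ℝ)*L^2 - 2*L + 1/b := by field_simp; ring
    have h4 : (b:ℝ) * (L-1/b)^2 ≤ (b:ℝ) * M^2 := by nlinarith
    have h5 : (0:ℝ) < 1/b := by positivity
    nlinarith
  -- reduce
  have hx : (0:ℝ) < ((Nat.factorial (b+1) : ℕ) : ℝ) := by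
    exact_mod_cast Nat.factorial_pos (b+1)
  rw [Real.rpow_def_of_pos hx]
  conv_rhs => rw [← Real.exp_log hb0]
  rw [Real.exp_lt_exp]
  rw [div_div]
  have hMb : 0 < M * b := by positivity
  rw [show K * (L / (M * (b:ℝ))) = K * L / (M * b) by ring, div_lt_iff₀ hMb]
  nlinarith
end

section
/- For every integer b ≥ 5, (b+1)^{2·log_b(b−2) + log_b(b+1)} < b^3; equivalently, log(b+1)·(2·log(b−2) + log(b+1)) < 3·(log b)^2. -/
theorem succ_rpow_combined_lt (b : ℕ) (hb : 5 ≤ b) :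
    ((b : ℝ) + 1) ^ (2 * (Real.log ((b : ℝ) - 2) / Real.log b) +
      Real.log ((b : ℝ) + 1) / Real.log b) < (b : ℝ) ^ 3 ∧
    Real.log ((b : ℝ) + 1) * (2 * Real.log ((b : ℝ) - 2) + Real.log ((b : ℝ) + 1)) <
      3 * (Real.log b) ^ 2 := by
  have hb5 : (5 : ℝ) ≤ (b : ℝ) := by exact_mod_cast hb
  set B : ℝ := (b : ℝ) with hB
  have hB1 : (1 : ℝ) < B := by linarith
  have hx : (0 : ℝ) < B - 2 := by linarith
  have hy : (0 : ℝ) < B + 1 := by linarith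
  have hz : (0 : ℝ) < B - 1 := by linarith
  set x := Real.log (B - 2)
  set y := Real.log (B + 1)
  set z := Real.log (B - 1)
  set L := Real.log B
  have hL : 0 < L := Real.log_pos hB1
  have hy0 : 0 < y := Real.log_pos (by linarith)
  have hz0 : 0 < z := Real.log_pos (by linarith)
  have hx0 : 0 < x := Real.log_pos (by linarith)
  -- Step 1: 2x + y < 3z
  have h1 : 2 * x + y < 3 * z := by
    have harith : (B - 2) ^ 2 * (B + 1) < (B - 1) ^ 3 := by nlinarith
    have := Real.log_lt_log (by positivity) harith
    rwa [Real.log_mul (by positivity) (by positivity), Real.log_pow, Real.log_pow,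
      Nat.cast_ofNat, Nat.cast_ofNat] at this
  -- Step 2: y + z < 2L
  have h2 : y + z < 2 * L := by
    have harith : (B + 1) * (B - 1) < B ^ 2 := by nlinarith
    have := Real.log_lt_log (by positivity) harith
    rwa [Real.log_mul (by positivity) (by positivity), Real.log_pow, Nat.cast_ofNat] at this
  have key : y * (2 * x + y) < 3 * L ^ 2 := by
    have h3 : y * (2 * x + y) < 3 * (y * z) := by nlinarith
    have h4 : y * z < L ^ 2 := by nlinarith [sq_nonneg (y - z)]
    linarith
  refine ⟨?_, key⟩
  have hL' : L ≠ 0 := ne_of_gt hL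
  have hexp : (2 * (x / L) + y / L) * y < 3 * L := by
    have heq : (2 * (x / L) + y / L) * y = y * (2 * x + y) / L := by
      field_simp
    rw [heq, div_lt_iff₀ hL]
    nlinarith
  calc (B + 1) ^ (2 * (x / L) + y / L)
      = Real.exp ((2 * (x / L) + y / L) * y) := by
        rw [Real.rpow_def_of_pos hy, mul_comm]
    _ < Real.exp (3 * L) := Real.exp_lt_exp.mpr hexp
    _ = B ^ 3 := by
        rw [show (3 : ℝ) * L = Real.log (B ^ 3) by rw [Real.log_pow]; push_cast; ring,
          Real.exp_log (by positivity)]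
end

section
/- Let b ≥ 5 and t be positive integers with t ≤ b/4. Then b^{log_b(t) − 1} · (b+t−1)^{log_b(b+t−1)} / b < 1; equivalently, log(b)·log(t) + (log(b+t−1))^2 < 2·(log b)^2. -/
theorem shifted_small_t_inequality (b t : ℕ) (hb : 5 ≤ b) (ht : 1 ≤ t) (htb : 4 * t ≤ b) :
    (b : ℝ) ^ (Real.log t / Real.log b - 1) *
      ((b : ℝ) + t - 1) ^ (Real.log ((b : ℝ) + t - 1) / Real.log b) / b < 1 ∧
    Real.log b * Real.log t + (Real.log ((b : ℝ) + t - 1)) ^ 2 < 2 * (Real.log b) ^ 2 := by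
  have hbR : (5:ℝ) ≤ (b:ℝ) := by exact_mod_cast hb
  have htR : (1:ℝ) ≤ (t:ℝ) := by exact_mod_cast ht
  have htbR : 4 * (t:ℝ) ≤ (b:ℝ) := by exact_mod_cast htb
  have hb0 : (0:ℝ) < b := by linarith
  have ht0 : (0:ℝ) < t := by linarith
  set L := Real.log b with hLdef
  set X := (b:ℝ) + t - 1 with hXdef
  have hX5 : (5:ℝ) ≤ X := by simp [hXdef]; linarith
  have hX0 : (0:ℝ) < X := by linarith
  have hL : 0 < L := Real.log_pos (by linarith)
  have hLne : L ≠ 0 := ne_of_gt hL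
  have hlt0 : 0 ≤ Real.log t := Real.log_nonneg htR
  have h1 : Real.log t ≤ L - Real.log 4 := by
    have := Real.log_le_log ht0 (show (t:ℝ) ≤ b / 4 by linarith)
    rwa [Real.log_div (by linarith) (by norm_num)] at this
  have hM0 : 0 ≤ Real.log X := Real.log_nonneg (by linarith)
  have h2 : Real.log X ≤ L + Real.log (5/4) := by
    have hle : X ≤ (5/4) * b := by simp [hXdef]; linarith
    have := Real.log_le_log hX0 hle
    rwa [Real.log_mul (by norm_num) (ne_of_gt hb0), add_comm] at this
  have ha0 : 0 ≤ Real.log (5/4 : ℝ) := Real.log_nonneg (by norm_num)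
  have hac : Real.log (5/4 : ℝ) < Real.log (64/25 : ℝ) :=
    Real.log_lt_log (by norm_num) (by norm_num)
  have hcL : Real.log (64/25 : ℝ) ≤ L :=
    Real.log_le_log (by norm_num) (by linarith)
  have hcdef : Real.log (64/25 : ℝ) = Real.log 4 - 2 * Real.log (5/4 : ℝ) := by
    rw [show (64/25 : ℝ) = 4 / (5/4)^2 by norm_num, Real.log_div (by norm_num) (by norm_num),
      Real.log_pow]
    push_cast; ring
  have key : L * Real.log t + (Real.log X) ^ 2 < 2 * L ^ 2 := by
    have hsq : (Real.log X) ^ 2 ≤ (L + Real.log (5/4)) ^ 2 := by nlinarith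
    nlinarith [mul_le_mul_of_nonneg_left h1 hL.le, hac, hcL, ha0, hL]
  refine ⟨?_, key⟩
  rw [Real.rpow_def_of_pos hb0, Real.rpow_def_of_pos hX0, div_lt_one hb0, ← Real.exp_add]
  nth_rewrite 2 [← Real.exp_log hb0]
  rw [Real.exp_lt_exp]
  have heq : Real.log b * (Real.log t / L - 1) + Real.log X * (Real.log X / L)
      = (L * Real.log t + (Real.log X) ^ 2) / L - L := by
    field_simp
    ring
  rw [heq, sub_lt_iff_lt_add, div_lt_iff₀ hL]
  nlinarith
end

section
/- Let b ≥ 5 and t be positive integers with t ≤ b/4. Then ((b+t−1)!/(t−1)!)^{(1/b)·log_b(b+t−1)} < b. -/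
/-- AM-GM style bound for products of consecutive numbers. -/
lemma aux_prod_le : ∀ (n a : ℕ), 1 ≤ a →
    (∏ i ∈ Finset.range n, ((a:ℝ) + i)) ≤ ((2*(a:ℝ) + n - 1)/2)^n := by
  intro n
  induction n using Nat.strong_induction_on with
  | _ n ih =>
    match n with
    | 0 => intro a _; simp
    | 1 => intro a _; simp
    | (m+2) =>
      intro a ha
      have hsplit : (∏ i ∈ Finset.range (m+2), ((a:ℝ) + i))
          = ((∏ i ∈ Finset.range m, ((a:ℝ) + 1 + i)) * ((a:ℝ) + 0)) * ((a:ℝ) + (m+1)) := by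
        have hterm : ∀ i : ℕ, (a:ℝ) + ↑(i+1) = (a:ℝ) + 1 + ↑i := fun i => by push_cast; ring
        rw [Finset.prod_range_succ, Finset.prod_range_succ']
        simp only [hterm]
        push_cast
        ring
      have key := ih m (by omega) (a+1) (by omega)
      push_cast at key
      set M : ℝ := (2*(a:ℝ) + m + 1)/2 with hM
      have key' : (∏ i ∈ Finset.range m, ((a:ℝ) + 1 + i)) ≤ M^m := by
        have : (2*((a:ℝ)+1) + m - 1)/2 = M := by rw [hM]; ring
        rw [this] at key; exact key
      have hPnn : (0:ℝ) ≤ ∏ i ∈ Finset.range m, ((a:ℝ) + 1 + i) :=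
        Finset.prod_nonneg (fun i _ => by positivity)
      have hMnn : (0:ℝ) ≤ M := by rw [hM]; positivity
      have h2 : ((a:ℝ) + 0) * ((a:ℝ) + (m+1)) ≤ M^2 := by
        rw [hM]; nlinarith [sq_nonneg ((m:ℝ)+1)]
      rw [hsplit]
      calc ((∏ i ∈ Finset.range m, ((a:ℝ) + 1 + i)) * ((a:ℝ) + 0)) * ((a:ℝ) + (m+1))
          = (∏ i ∈ Finset.range m, ((a:ℝ) + 1 + i)) * (((a:ℝ) + 0) * ((a:ℝ) + (m+1))) := by ring
        _ ≤ M^m * M^2 := by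
            apply mul_le_mul key' h2 (by positivity) (by positivity)
        _ = ((2*(a:ℝ) + (↑(m+2):ℝ) - 1)/2)^(m+2) := by
            rw [hM]; push_cast; ring

lemma aux_fact (t : ℕ) (ht : 1 ≤ t) :
    ∀ b : ℕ, Nat.factorial (t-1) * ∏ i ∈ Finset.range b, (t+i) = Nat.factorial (b + t - 1) := by
  intro b
  induction b with
  | zero => simp
  | succ n ihn =>
    rw [Finset.prod_range_succ, ← mul_assoc, ihn]
    have h1 : n + 1 + t - 1 = (n + t - 1) + 1 := by omega
    have h2 : n + t - 1 + 1 = t + n := by omega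
    rw [h1, Nat.factorial_succ, h2]
    ring

theorem factorial_quotient_rpow_lt (b t : ℕ) (hb : 5 ≤ b) (ht : 1 ≤ t) (htb : 4 * t ≤ b) :
    ((Nat.factorial (b + t - 1) : ℝ) / (Nat.factorial (t - 1) : ℝ)) ^
      ((1 / (b : ℝ)) * (Real.log ((b : ℝ) + t - 1) / Real.log b)) < (b : ℝ) := by
  have hB5 : (5:ℝ) ≤ (b:ℝ) := by exact_mod_cast hb
  have hT1 : (1:ℝ) ≤ (t:ℝ) := by exact_mod_cast ht
  have hTB : 4*(t:ℝ) ≤ (b:ℝ) := by exact_mod_cast htb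
  have hBpos : (0:ℝ) < (b:ℝ) := by linarith
  have hfacpos : (0:ℝ) < (Nat.factorial (t-1) : ℝ) := by exact_mod_cast (t-1).factorial_pos
  have hQ : ((Nat.factorial (b+t-1) : ℝ)) / (Nat.factorial (t-1) : ℝ)
      = ∏ i ∈ Finset.range b, ((t:ℝ) + i) := by
    have h := congrArg (Nat.cast : ℕ → ℝ) (aux_fact t ht b)
    push_cast at h
    rw [div_eq_iff hfacpos.ne', ← h]
    ring
  set L : ℝ := Real.log ((b:ℝ) + t - 1) with hLdef
  set e : ℝ := (1 / (b : ℝ)) * (L / Real.log b) with hedef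
  have hL : 0 < L := Real.log_pos (by linarith)
  have hlogB : 0 < Real.log b := Real.log_pos (by linarith)
  have he : 0 < e := mul_pos (by positivity) (div_pos hL hlogB)
  have hCpos : (0:ℝ) < 3*(b:ℝ)/4 := by linarith
  have hC1 : (1:ℝ) < 3*(b:ℝ)/4 := by linarith
  have hlogC : 0 < Real.log (3*(b:ℝ)/4) := Real.log_pos hC1
  have hQlt : ((Nat.factorial (b+t-1) : ℝ)) / (Nat.factorial (t-1) : ℝ) < (3*(b:ℝ)/4)^b := by
    rw [hQ]
    refine lt_of_le_of_lt (aux_prod_le b t ht) ?_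
    apply pow_lt_pow_left₀ _ (by linarith) (by omega)
    linarith
  have hQ0 : (0:ℝ) ≤ ((Nat.factorial (b+t-1) : ℝ)) / (Nat.factorial (t-1) : ℝ) := by positivity
  have hfinal : (3*(b:ℝ)/4) ^ (L / Real.log b) ≤ (b:ℝ) := by
    rw [Real.rpow_def_of_pos hCpos]
    have hexp : Real.log (3*(b:ℝ)/4) * (L / Real.log b) ≤ Real.log b := by
      rw [mul_div_assoc', div_le_iff₀ hlogB]
      have hL5 : L ≤ Real.log (5*(b:ℝ)/4) := by
        apply Real.log_le_log (by linarith)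
        linarith
      have h1 : Real.log (3*(b:ℝ)/4) * L ≤ Real.log (3*(b:ℝ)/4) * Real.log (5*(b:ℝ)/4) :=
        mul_le_mul_of_nonneg_left hL5 hlogC.le
      have hsplit3 : Real.log (3*(b:ℝ)/4) = Real.log b + Real.log (3/4) := by
        rw [show 3*(b:ℝ)/4 = (b:ℝ)*(3/4) by ring, Real.log_mul hBpos.ne' (by norm_num)]
      have hsplit5 : Real.log (5*(b:ℝ)/4) = Real.log b + Real.log (5/4) := by
        rw [show 5*(b:ℝ)/4 = (b:ℝ)*(5/4) by ring, Real.log_mul hBpos.ne' (by norm_num)]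
      have h34 : Real.log (3/4 : ℝ) < 0 := Real.log_neg (by norm_num) (by norm_num)
      have h54 : (0:ℝ) < Real.log (5/4 : ℝ) := Real.log_pos (by norm_num)
      have hsum : Real.log (5/4 : ℝ) + Real.log (3/4 : ℝ) < 0 := by
        rw [← Real.log_mul (by norm_num) (by norm_num)]
        exact Real.log_neg (by norm_num) (by norm_num)
      nlinarith [hlogB, h34, h54, hsum, hsplit3, hsplit5, h1]
    calc Real.exp (Real.log (3*(b:ℝ)/4) * (L / Real.log b))
        ≤ Real.exp (Real.log b) := Real.exp_le_exp.mpr hexp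
      _ = (b:ℝ) := Real.exp_log hBpos
  calc (((Nat.factorial (b+t-1) : ℝ)) / (Nat.factorial (t-1) : ℝ)) ^ e
      < ((3*(b:ℝ)/4)^b) ^ e := Real.rpow_lt_rpow hQ0 hQlt he
    _ = (3*(b:ℝ)/4) ^ ((b:ℝ) * e) := by
        rw [← Real.rpow_natCast (3*(b:ℝ)/4) b, ← Real.rpow_mul hCpos.le]
    _ = (3*(b:ℝ)/4) ^ (L / Real.log b) := by
        congr 1
        rw [hedef]
        field_simp
    _ ≤ (b:ℝ) := hfinal
end
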